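/- For all reals λ_m > 0, λ_d > 0 with η = λ_d/λ_m, and every integer i ≥ 1, ∫_0^∞ 2λ_mπ y · exp(−λ_mπ y²) · ( ∫_y^∞ [ 1 − exp(−λ_dπ x²) · Σ_{j=0}^{i−1} (λ_dπ x²)^j / j! ] · 8λ_mπ x · exp(−4λ_mπ x²) · (1 − exp(−λ_mπ x²)) dx ) dy = (1/5) · [ 5·(1 + 4/η)^(−i) + (10/3)·(1 + 6/η)^(−i) − 8·(1 + 5/η)^(−i) ]. -/

import Mathlib

open Real MeasureTheory

lemma aux_intOn {b : ℝ} (hb : 0 < b) (n : ℕ) :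
    IntegrableOn (fun x : ℝ => x ^ n * Real.exp (-(b * x ^ 2))) (Set.Ioi 0) := by
  have h := integrableOn_rpow_mul_exp_neg_mul_sq hb
      (s := (n : ℝ)) (lt_of_lt_of_le neg_one_lt_zero (Nat.cast_nonneg n))
  simp_rw [neg_mul] at h
  apply h.congr_fun _ measurableSet_Ioi
  intro x hx
  simp [Real.rpow_natCast]

lemma aux_moment {b : ℝ} (hb : 0 < b) (j : ℕ) :
    ∫ x in Set.Ioi (0:ℝ), x ^ (2*j+1) * Real.exp (-(b * x ^ 2)) =
      (Nat.factorial j : ℝ) / (2 * b ^ (j+1)) := by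
  have h := integral_rpow_mul_exp_neg_mul_rpow (p := 2) (q := ((2*j+1 : ℕ) : ℝ))
      (by norm_num) (lt_of_lt_of_le neg_one_lt_zero (Nat.cast_nonneg _)) hb
  rw [show ∫ x in Set.Ioi (0:ℝ), x ^ (2*j+1) * Real.exp (-(b * x ^ 2))
      = ∫ x in Set.Ioi (0:ℝ), x ^ ((2*j+1 : ℕ) : ℝ) * Real.exp (-b * x ^ (2:ℝ)) by
    refine setIntegral_congr_fun measurableSet_Ioi (fun x hx => ?_)
    rw [Real.rpow_natCast, neg_mul, show x ^ (2:ℝ) = x ^ (2:ℕ) by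
      rw [← Real.rpow_natCast x 2]; norm_num]]
  rw [h]
  have h1 : (-(((2*j+1 : ℕ) : ℝ) + 1) / 2) = -((j:ℝ)+1) := by push_cast; ring
  have h2 : ((((2*j+1 : ℕ) : ℝ)) + 1) / 2 = (j:ℝ)+1 := by push_cast; ring
  rw [h1, h2, Real.Gamma_nat_eq_factorial, Real.rpow_neg hb.le,
    show ((j:ℝ)+1) = ((j+1 : ℕ):ℝ) by push_cast; ring, Real.rpow_natCast]
  ring

lemma aux_geom {b c : ℝ} (hb : 0 < b) (hc : 0 < c) (i : ℕ) :
    ∑ j ∈ Finset.range i, c ^ j / (2 * (b + c) ^ (j+1)) = (1 - (c / (b+c)) ^ i) / (2 * b) := by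
  induction i with
  | zero => simp
  | succ n ih =>
    rw [Finset.sum_range_succ, ih, pow_succ, div_pow]
    have h1 : (b + c) ≠ 0 := by positivity
    have h2 : ((b + c):ℝ) ^ n ≠ 0 := by positivity
    have h3 : b ≠ 0 := hb.ne'
    rw [div_pow]
    field_simp
    ring

lemma aux_T {b c : ℝ} (hb : 0 < b) (hc : 0 < c) (i : ℕ) :
    IntegrableOn (fun x : ℝ => x * Real.exp (-(b * x ^ 2)) *
        (1 - Real.exp (-(c * x ^ 2)) *
          ∑ j ∈ Finset.range i, (c * x ^ 2) ^ j / (Nat.factorial j : ℝ))) (Set.Ioi 0) ∧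
    ∫ x in Set.Ioi (0:ℝ), x * Real.exp (-(b * x ^ 2)) *
        (1 - Real.exp (-(c * x ^ 2)) *
          ∑ j ∈ Finset.range i, (c * x ^ 2) ^ j / (Nat.factorial j : ℝ))
      = (c / (b + c)) ^ i / (2 * b) := by
  have hbc : 0 < b + c := by positivity
  have key : (fun x : ℝ => x * Real.exp (-(b * x ^ 2)) *
        (1 - Real.exp (-(c * x ^ 2)) *
          ∑ j ∈ Finset.range i, (c * x ^ 2) ^ j / (Nat.factorial j : ℝ)))
      = fun x : ℝ => x ^ (2*0+1) * Real.exp (-(b * x ^ 2)) -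
          ∑ j ∈ Finset.range i, (c ^ j / (Nat.factorial j : ℝ)) *
            (x ^ (2*j+1) * Real.exp (-((b+c) * x ^ 2))) := by
    funext x
    have hexp : Real.exp (-((b+c) * x ^ 2)) = Real.exp (-(b * x ^ 2)) * Real.exp (-(c * x ^ 2)) := by
      rw [← Real.exp_add]; ring_nf
    simp only [hexp, Finset.mul_sum]
    rw [mul_sub, mul_one, Finset.mul_sum]
    congr 1
    · ring
    refine Finset.sum_congr rfl fun j _ => ?_
    ring
  have hint : ∀ j : ℕ, IntegrableOn
      (fun x : ℝ => (c ^ j / (Nat.factorial j : ℝ)) *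
        (x ^ (2*j+1) * Real.exp (-((b+c) * x ^ 2)))) (Set.Ioi 0) :=
    fun j => (aux_intOn hbc (2*j+1)).const_mul _
  have hsumint : IntegrableOn (fun x : ℝ => ∑ j ∈ Finset.range i,
      (c ^ j / (Nat.factorial j : ℝ)) *
        (x ^ (2*j+1) * Real.exp (-((b+c) * x ^ 2)))) (Set.Ioi 0) := by
    apply integrable_finset_sum
    intro j _
    exact hint j
  have h1 : IntegrableOn (fun x : ℝ => x ^ (2*0+1) * Real.exp (-(b * x ^ 2))) (Set.Ioi 0) :=
    aux_intOn hb 1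
  constructor
  · rw [key]; exact h1.sub hsumint
  rw [key, MeasureTheory.integral_sub h1 hsumint, MeasureTheory.integral_finset_sum _
    (fun j _ => hint j)]
  rw [aux_moment hb 0]
  have : ∀ j ∈ Finset.range i, ∫ x in Set.Ioi (0:ℝ),
      (c ^ j / (Nat.factorial j : ℝ)) * (x ^ (2*j+1) * Real.exp (-((b+c) * x ^ 2)))
      = c ^ j / (2 * (b+c) ^ (j+1)) := by
    intro j _
    rw [integral_const_mul, aux_moment hbc j]
    have : (Nat.factorial j : ℝ) ≠ 0 := Nat.cast_ne_zero.mpr (Nat.factorial_ne_zero j)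
    field_simp
  rw [Finset.sum_congr rfl this, aux_geom hb hc i]
  have h3 : b ≠ 0 := hb.ne'
  have h4 : (b+c) ≠ 0 := hbc.ne'
  simp only [Nat.factorial_zero, Nat.cast_one, pow_one]
  field_simp
  ring

lemma aux_cdf {a : ℝ} {x : ℝ} (hx : 0 ≤ x) :
    ∫ y in Set.Ioo (0:ℝ) x, 2 * a * y * Real.exp (-(a * y ^ 2))
      = 1 - Real.exp (-(a * x ^ 2)) := by
  rw [← MeasureTheory.integral_Ioc_eq_integral_Ioo, ← intervalIntegral.integral_of_le hx]
  have hD : ∀ y ∈ Set.uIcc (0:ℝ) x,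
      HasDerivAt (fun t : ℝ => -Real.exp (-(a * t ^ 2)))
        (2 * a * y * Real.exp (-(a * y ^ 2))) y := by
    intro y _
    have h1 : HasDerivAt (fun t : ℝ => -(a * t ^ 2)) (-(a * (2 * y))) y := by
      simpa using ((hasDerivAt_pow 2 y).const_mul a).fun_neg
    have h2 := (h1.exp).fun_neg
    refine h2.congr_deriv ?_
    ring
  rw [intervalIntegral.integral_eq_sub_of_hasDerivAt hD
    (Continuous.intervalIntegrable (by continuity) _ _)]
  simp
  ring

lemma aux_swap (g f : ℝ → ℝ) (hg : IntegrableOn g (Set.Ioi 0))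
    (hf : IntegrableOn f (Set.Ioi 0)) (hgm : Measurable g) (hfm : Measurable f) :
    (∫ y in Set.Ioi (0:ℝ), g y * ∫ x in Set.Ioi y, f x)
      = ∫ x in Set.Ioi (0:ℝ), (∫ y in Set.Ioo (0:ℝ) x, g y) * f x := by
  have meas : Measurable (Function.uncurry fun y x : ℝ => g y * (Set.Ioi y).indicator f x) := by
    have : (Function.uncurry fun y x : ℝ => g y * (Set.Ioi y).indicator f x)
        = fun p : ℝ × ℝ => g p.1 * ({q : ℝ × ℝ | q.1 < q.2}.indicator (fun q => f q.2) p) := by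
      funext p
      simp [Function.uncurry, Set.indicator_apply]
    rw [this]
    exact (hgm.comp measurable_fst).mul
      ((hfm.comp measurable_snd).indicator (measurableSet_lt measurable_fst measurable_snd))
  have hint : Integrable (Function.uncurry fun y x : ℝ => g y * (Set.Ioi y).indicator f x)
      ((volume.restrict (Set.Ioi 0)).prod (volume.restrict (Set.Ioi 0))) := by
    apply Integrable.mono' (hg.norm.mul_prod hf.norm) meas.aestronglyMeasurable
    filter_upwards with p
    simp only [Function.uncurry, norm_mul]
    gcongr
    apply norm_indicator_le_norm_self
  calc
    (∫ y in Set.Ioi (0:ℝ), g y * ∫ x in Set.Ioi y, f x)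
        = ∫ y in Set.Ioi (0:ℝ), ∫ x in Set.Ioi (0:ℝ), g y * (Set.Ioi y).indicator f x := by
          refine setIntegral_congr_fun measurableSet_Ioi (fun y hy => ?_)
          rw [integral_const_mul]
          congr 1
          rw [MeasureTheory.integral_indicator measurableSet_Ioi,
            Measure.restrict_restrict measurableSet_Ioi, Set.Ioi_inter_Ioi,
            sup_eq_left.mpr (le_of_lt hy)]
    _ = ∫ x in Set.Ioi (0:ℝ), ∫ y in Set.Ioi (0:ℝ), g y * (Set.Ioi y).indicator f x :=
          integral_integral_swap hint
    _ = ∫ x in Set.Ioi (0:ℝ), (∫ y in Set.Ioo (0:ℝ) x, g y) * f x := by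
          refine setIntegral_congr_fun measurableSet_Ioi (fun x _ => ?_)
          have : (fun y : ℝ => g y * (Set.Ioi y).indicator f x)
              = (Set.Iio x).indicator (fun y => g y * f x) := by
            funext y
            simp only [Set.indicator_apply, Set.mem_Ioi, Set.mem_Iio, mul_ite, mul_zero]
          rw [this, MeasureTheory.integral_indicator measurableSet_Iio,
            Measure.restrict_restrict measurableSet_Iio, Set.Iio_inter_Ioi,
            integral_mul_const]


theorem stmt_7 (lm ld η : ℝ) (hlm : 0 < lm) (hld : 0 < ld) (hη : η = ld / lm)
    (i : ℕ) (hi : 1 ≤ i) :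
    ∫ y in Set.Ioi (0 : ℝ),
        2 * lm * π * y * Real.exp (-(lm * π * y ^ 2)) *
          (∫ x in Set.Ioi y,
            (1 - Real.exp (-(ld * π * x ^ 2)) *
                ∑ j ∈ Finset.range i, (ld * π * x ^ 2) ^ j / (Nat.factorial j : ℝ)) *
              (8 * lm * π * x * Real.exp (-(4 * lm * π * x ^ 2))) *
              (1 - Real.exp (-(lm * π * x ^ 2)))) =
      (1 / 5) *
        (5 * (1 + 4 / η) ^ (-(i : ℤ)) + (10 / 3) * (1 + 6 / η) ^ (-(i : ℤ)) -
          8 * (1 + 5 / η) ^ (-(i : ℤ))) := by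
  have hπ : (0:ℝ) < π := Real.pi_pos
  have hA : 0 < lm * π := by positivity
  have hC : 0 < ld * π := by positivity
  have hb4 : 0 < 4 * (lm * π) := by positivity
  have hb5 : 0 < 5 * (lm * π) := by positivity
  have hb6 : 0 < 6 * (lm * π) := by positivity
  have hT4 := aux_T hb4 hC i
  have hT5 := aux_T hb5 hC i
  have hT6 := aux_T hb6 hC i
  -- exponent rewriting helpers
  have e4 : ∀ x : ℝ, Real.exp (-(4 * lm * π * x ^ 2)) = Real.exp (-(lm * π * x ^ 2)) ^ 4 := by
    intro x; rw [← Real.exp_nat_mul]; congr 1; push_cast; ring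
  have e4' : ∀ x : ℝ, Real.exp (-(4 * (lm * π) * x ^ 2)) = Real.exp (-(lm * π * x ^ 2)) ^ 4 := by
    intro x; rw [← Real.exp_nat_mul]; congr 1; push_cast; ring
  have e5' : ∀ x : ℝ, Real.exp (-(5 * (lm * π) * x ^ 2)) = Real.exp (-(lm * π * x ^ 2)) ^ 5 := by
    intro x; rw [← Real.exp_nat_mul]; congr 1; push_cast; ring
  have e6' : ∀ x : ℝ, Real.exp (-(6 * (lm * π) * x ^ 2)) = Real.exp (-(lm * π * x ^ 2)) ^ 6 := by
    intro x; rw [← Real.exp_nat_mul]; congr 1; push_cast; ring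
  -- key pointwise identities
  have hkey : ∀ x : ℝ, (1 - Real.exp (-(lm * π * x ^ 2))) *
      ((1 - Real.exp (-(ld * π * x ^ 2)) *
          ∑ j ∈ Finset.range i, (ld * π * x ^ 2) ^ j / (Nat.factorial j : ℝ)) *
        (8 * lm * π * x * Real.exp (-(4 * lm * π * x ^ 2))) *
        (1 - Real.exp (-(lm * π * x ^ 2)))) =
      8 * (lm * π) *
        (x * Real.exp (-(4 * (lm * π) * x ^ 2)) *
            (1 - Real.exp (-(ld * π * x ^ 2)) *
              ∑ j ∈ Finset.range i, (ld * π * x ^ 2) ^ j / (Nat.factorial j : ℝ)) -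
          2 * (x * Real.exp (-(5 * (lm * π) * x ^ 2)) *
            (1 - Real.exp (-(ld * π * x ^ 2)) *
              ∑ j ∈ Finset.range i, (ld * π * x ^ 2) ^ j / (Nat.factorial j : ℝ))) +
          x * Real.exp (-(6 * (lm * π) * x ^ 2)) *
            (1 - Real.exp (-(ld * π * x ^ 2)) *
              ∑ j ∈ Finset.range i, (ld * π * x ^ 2) ^ j / (Nat.factorial j : ℝ))) := by
    intro x
    rw [e4 x, e4' x, e5' x, e6' x]
    ring
  have hfeq : (fun x : ℝ =>
      (1 - Real.exp (-(ld * π * x ^ 2)) *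
          ∑ j ∈ Finset.range i, (ld * π * x ^ 2) ^ j / (Nat.factorial j : ℝ)) *
        (8 * lm * π * x * Real.exp (-(4 * lm * π * x ^ 2))) *
        (1 - Real.exp (-(lm * π * x ^ 2)))) =
      fun x : ℝ => 8 * (lm * π) *
        (x * Real.exp (-(4 * (lm * π) * x ^ 2)) *
            (1 - Real.exp (-(ld * π * x ^ 2)) *
              ∑ j ∈ Finset.range i, (ld * π * x ^ 2) ^ j / (Nat.factorial j : ℝ)) -
          x * Real.exp (-(5 * (lm * π) * x ^ 2)) *
            (1 - Real.exp (-(ld * π * x ^ 2)) *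
              ∑ j ∈ Finset.range i, (ld * π * x ^ 2) ^ j / (Nat.factorial j : ℝ))) := by
    funext x
    rw [e4 x, e4' x, e5' x]
    ring
  have hfint : IntegrableOn (fun x : ℝ =>
      (1 - Real.exp (-(ld * π * x ^ 2)) *
          ∑ j ∈ Finset.range i, (ld * π * x ^ 2) ^ j / (Nat.factorial j : ℝ)) *
        (8 * lm * π * x * Real.exp (-(4 * lm * π * x ^ 2))) *
        (1 - Real.exp (-(lm * π * x ^ 2)))) (Set.Ioi 0) := by
    rw [hfeq]
    exact (hT4.1.sub hT5.1).const_mul _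
  have hfm : Measurable (fun x : ℝ =>
      (1 - Real.exp (-(ld * π * x ^ 2)) *
          ∑ j ∈ Finset.range i, (ld * π * x ^ 2) ^ j / (Nat.factorial j : ℝ)) *
        (8 * lm * π * x * Real.exp (-(4 * lm * π * x ^ 2))) *
        (1 - Real.exp (-(lm * π * x ^ 2)))) := by
    fun_prop
  have hgm : Measurable (fun y : ℝ => 2 * lm * π * y * Real.exp (-(lm * π * y ^ 2))) := by
    fun_prop
  have hgint : IntegrableOn (fun y : ℝ => 2 * lm * π * y * Real.exp (-(lm * π * y ^ 2)))
      (Set.Ioi 0) := by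
    have h := ((integrable_mul_exp_neg_mul_sq hA).const_mul
      (2 * lm * π)).integrableOn (s := Set.Ioi 0)
    have heq : (fun y : ℝ => 2 * lm * π * y * Real.exp (-(lm * π * y ^ 2)))
        = fun y : ℝ => 2 * lm * π * (y * Real.exp (-(lm * π) * y ^ 2)) := by
      funext y; rw [neg_mul]; ring
    rw [heq]; exact h
  calc
    _ = ∫ x in Set.Ioi (0:ℝ),
          (∫ y in Set.Ioo (0:ℝ) x, 2 * lm * π * y * Real.exp (-(lm * π * y ^ 2))) *
          ((1 - Real.exp (-(ld * π * x ^ 2)) *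
              ∑ j ∈ Finset.range i, (ld * π * x ^ 2) ^ j / (Nat.factorial j : ℝ)) *
            (8 * lm * π * x * Real.exp (-(4 * lm * π * x ^ 2))) *
            (1 - Real.exp (-(lm * π * x ^ 2)))) :=
      aux_swap _ _ hgint hfint hgm hfm
    _ = ∫ x in Set.Ioi (0:ℝ), (1 - Real.exp (-(lm * π * x ^ 2))) *
          ((1 - Real.exp (-(ld * π * x ^ 2)) *
              ∑ j ∈ Finset.range i, (ld * π * x ^ 2) ^ j / (Nat.factorial j : ℝ)) *
            (8 * lm * π * x * Real.exp (-(4 * lm * π * x ^ 2))) *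
            (1 - Real.exp (-(lm * π * x ^ 2)))) := by
      refine setIntegral_congr_fun measurableSet_Ioi (fun x hx => ?_)
      congr 1
      rw [← aux_cdf (a := lm * π) (le_of_lt hx)]
      refine setIntegral_congr_fun measurableSet_Ioo (fun y _ => ?_)
      ring
    _ = ∫ x in Set.Ioi (0:ℝ), 8 * (lm * π) *
        (x * Real.exp (-(4 * (lm * π) * x ^ 2)) *
            (1 - Real.exp (-(ld * π * x ^ 2)) *
              ∑ j ∈ Finset.range i, (ld * π * x ^ 2) ^ j / (Nat.factorial j : ℝ)) -
          2 * (x * Real.exp (-(5 * (lm * π) * x ^ 2)) *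
            (1 - Real.exp (-(ld * π * x ^ 2)) *
              ∑ j ∈ Finset.range i, (ld * π * x ^ 2) ^ j / (Nat.factorial j : ℝ))) +
          x * Real.exp (-(6 * (lm * π) * x ^ 2)) *
            (1 - Real.exp (-(ld * π * x ^ 2)) *
              ∑ j ∈ Finset.range i, (ld * π * x ^ 2) ^ j / (Nat.factorial j : ℝ))) :=
      setIntegral_congr_fun measurableSet_Ioi (fun x _ => hkey x)
    _ = 8 * (lm * π) *
        ((∫ x in Set.Ioi (0:ℝ), x * Real.exp (-(4 * (lm * π) * x ^ 2)) *
            (1 - Real.exp (-(ld * π * x ^ 2)) *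
              ∑ j ∈ Finset.range i, (ld * π * x ^ 2) ^ j / (Nat.factorial j : ℝ))) -
          2 * (∫ x in Set.Ioi (0:ℝ), x * Real.exp (-(5 * (lm * π) * x ^ 2)) *
            (1 - Real.exp (-(ld * π * x ^ 2)) *
              ∑ j ∈ Finset.range i, (ld * π * x ^ 2) ^ j / (Nat.factorial j : ℝ))) +
          (∫ x in Set.Ioi (0:ℝ), x * Real.exp (-(6 * (lm * π) * x ^ 2)) *
            (1 - Real.exp (-(ld * π * x ^ 2)) *
              ∑ j ∈ Finset.range i, (ld * π * x ^ 2) ^ j / (Nat.factorial j : ℝ)))) := by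
      have h5' : Integrable (fun x : ℝ => 2 * (x * Real.exp (-(5 * (lm * π) * x ^ 2)) *
            (1 - Real.exp (-(ld * π * x ^ 2)) *
              ∑ j ∈ Finset.range i, (ld * π * x ^ 2) ^ j / (Nat.factorial j : ℝ))))
          (volume.restrict (Set.Ioi 0)) := hT5.1.const_mul 2
      have hsub : Integrable (fun x : ℝ => x * Real.exp (-(4 * (lm * π) * x ^ 2)) *
            (1 - Real.exp (-(ld * π * x ^ 2)) *
              ∑ j ∈ Finset.range i, (ld * π * x ^ 2) ^ j / (Nat.factorial j : ℝ)) -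
          2 * (x * Real.exp (-(5 * (lm * π) * x ^ 2)) *
            (1 - Real.exp (-(ld * π * x ^ 2)) *
              ∑ j ∈ Finset.range i, (ld * π * x ^ 2) ^ j / (Nat.factorial j : ℝ))))
          (volume.restrict (Set.Ioi 0)) := hT4.1.sub h5'
      rw [integral_const_mul, MeasureTheory.integral_add hsub hT6.1,
        MeasureTheory.integral_sub hT4.1 h5', integral_const_mul]
    _ = (1 / 5) *
        (5 * (1 + 4 / η) ^ (-(i : ℤ)) + (10 / 3) * (1 + 6 / η) ^ (-(i : ℤ)) -
          8 * (1 + 5 / η) ^ (-(i : ℤ))) := by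
      rw [hT4.2, hT5.2, hT6.2]
      have hconv : ∀ k : ℝ, 0 < k →
          (1 + k / η) ^ (-(i : ℤ)) = (ld * π / (k * (lm * π) + ld * π)) ^ i := by
        intro k hk
        have h1 : 1 + k / η = (k * (lm * π) + ld * π) / (ld * π) := by
          rw [hη]
          field_simp
          ring
        rw [h1, zpow_neg, zpow_natCast, ← inv_pow, inv_div]
      rw [hconv 4 (by norm_num), hconv 5 (by norm_num), hconv 6 (by norm_num)]
      generalize (ld * π / (4 * (lm * π) + ld * π)) ^ i = r4
      generalize (ld * π / (5 * (lm * π) + ld * π)) ^ i = r5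
      generalize (ld * π / (6 * (lm * π) + ld * π)) ^ i = r6
      have h0 : lm * π ≠ 0 := hA.ne'
      field_simp
      ring
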